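/- Same-level confluence: if a • R_{i,x} and a • R_{i,y} are defined, i is negative in a, and a_i, x, y admit a common right multiple, then a • R_{i,x}R_{i,v} and a • R_{i,y}R_{i,w} are defined and equal, where v, w are given by x ∨ y = xv = yw. -/
import Mathlib


namespace MFR

variable {M : Type*} [Monoid M]

/-- `a` left-divides `b`. -/
def LeftDvd (a b : M) : Prop := ∃ x, a * x = b

/-- `a` right-divides `b`. -/
def RightDvd (a b : M) : Prop := ∃ x, x * a = b

/-- `m` is a right lcm of `a` and `b`. -/
def IsRightLcm (a b m : M) : Prop :=
  LeftDvd a m ∧ LeftDvd b m ∧ ∀ m', LeftDvd a m' → LeftDvd b m' → LeftDvd m m'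

/-- `m` is a left lcm of `a` and `b`. -/
def IsLeftLcm (a b m : M) : Prop :=
  RightDvd a m ∧ RightDvd b m ∧ ∀ m', RightDvd a m' → RightDvd b m' → RightDvd m m'

/-- `d` is a left gcd of `a` and `b`. -/
def IsLeftGcd (a b d : M) : Prop :=
  LeftDvd d a ∧ LeftDvd d b ∧ ∀ e, LeftDvd e a → LeftDvd e b → LeftDvd e d

/-- `d` is a right gcd of `a` and `b`. -/
def IsRightGcd (a b d : M) : Prop :=
  RightDvd d a ∧ RightDvd d b ∧ ∀ e, RightDvd e a → RightDvd e b → RightDvd e d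

/-- A gcd-monoid: cancellative, no nontrivial invertible elements,
left and right gcds exist. -/
structure IsGcdMon (M : Type*) [Monoid M] : Prop where
  mul_left_cancel : ∀ a b c : M, a * b = a * c → b = c
  mul_right_cancel : ∀ a b c : M, b * a = c * a → b = c
  unit_eq_one : ∀ a : M, IsUnit a → a = 1
  exists_leftGcd : ∀ a b : M, ∃ d, IsLeftGcd a b d
  exists_rightGcd : ∀ a b : M, ∃ d, IsRightGcd a b d

/-- Proper left divisibility: `a < b`. -/
def PLDvd (a b : M) : Prop := ∃ x, ¬ IsUnit x ∧ a * x = b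

/-- Proper right divisibility. -/
def PRDvd (a b : M) : Prop := ∃ x, ¬ IsUnit x ∧ x * a = b

/-- Noetherian: proper left and right divisibility are well-founded. -/
def Noeth (M : Type*) [Monoid M] : Prop :=
  WellFounded (PLDvd (M := M)) ∧ WellFounded (PRDvd (M := M))

/-- Proper factor relation. -/
def Factor (a b : M) : Prop := ∃ x y, x * a * y = b ∧ (¬ IsUnit x ∨ ¬ IsUnit y)

/-- Atoms: not a product of two non-invertible elements. -/
def Atomic (a : M) : Prop := ¬ IsUnit a ∧ ∀ x y, a = x * y → IsUnit x ∨ IsUnit y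

/-- Existence of a common right multiple. -/
def CommonRightMul (a b : M) : Prop := ∃ m, LeftDvd a m ∧ LeftDvd b m

/-- Existence of a common left multiple. -/
def CommonLeftMul (a b : M) : Prop := ∃ m, RightDvd a m ∧ RightDvd b m

/-- The 3-Ore condition. -/
def ThreeOre (M : Type*) [Monoid M] : Prop :=
  (∀ a b c : M, CommonRightMul a b → CommonRightMul a c → CommonRightMul b c →
    ∃ m, LeftDvd a m ∧ LeftDvd b m ∧ LeftDvd c m) ∧
  (∀ a b c : M, CommonLeftMul a b → CommonLeftMul a c → CommonLeftMul b c →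
    ∃ m, RightDvd a m ∧ RightDvd b m ∧ RightDvd c m)

/-- The product of two multifractions. -/
def fprod : List M → List M → List M
  | [], b => b
  | a, [] => a
  | a, h :: t =>
    if a.length % 2 = 1 then a.dropLast ++ ((a.getLast?.getD 1) * h) :: t
    else a ++ h :: t

/-- The congruence `≃` on multifractions generated by `(1,∅)`, `(a/a,∅)`, `(1/a/a,∅)`. -/
inductive SimEq : List M → List M → Prop
  | one : SimEq [1] []
  | divPos (a : M) : SimEq [a, a] []
  | divNeg (a : M) : SimEq [1, a, a] []
  | refl (a : List M) : SimEq a a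
  | symm {a b} : SimEq a b → SimEq b a
  | trans {a b c} : SimEq a b → SimEq b c → SimEq a c
  | mul {a b c d} : SimEq a b → SimEq c d → SimEq (fprod a c) (fprod b d)

/-- The reduction rule `R_{i,x}` on multifractions (entries indexed from 1):
`Reduce i x a b` means `b = a • R_{i,x}`. -/
def Reduce (i : ℕ) (x : M) (a b : List M) : Prop :=
  (i = 1 ∧ ∃ (a₁ a₂ b₁ b₂ : M) (s : List M),
    a = a₁ :: a₂ :: s ∧ b = b₁ :: b₂ :: s ∧ b₁ * x = a₁ ∧ b₂ * x = a₂) ∨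
  (2 ≤ i ∧ i % 2 = 0 ∧ ∃ (p s : List M) (am ai ap bi bp x' : M),
    p.length = i - 2 ∧
    a = p ++ am :: ai :: ap :: s ∧
    b = p ++ (am * x') :: bi :: bp :: s ∧
    IsRightLcm x ai (x * bi) ∧ x * bi = ai * x' ∧ x * bp = ap) ∨
  (3 ≤ i ∧ i % 2 = 1 ∧ ∃ (p s : List M) (am ai ap bi bp x' : M),
    p.length = i - 2 ∧
    a = p ++ am :: ai :: ap :: s ∧
    b = p ++ (x' * am) :: bi :: bp :: s ∧
    IsLeftLcm x ai (bi * x) ∧ bi * x = x' * ai ∧ bp * x = ap)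

/-- One-step reduction. -/
def Red (a b : List M) : Prop := ∃ i x, x ≠ (1 : M) ∧ Reduce i x a b

/-- Reflexive-transitive closure of one-step reduction. -/
def RedStar : List M → List M → Prop := Relation.ReflTransGen Red

/-- Irreducible multifractions. -/
def RIrred (a : List M) : Prop := ∀ b, ¬ Red a b

/-- Right basic elements: closure of the atoms under right complement. -/
inductive RightBasic : M → Prop
  | atom {a : M} : Atomic a → RightBasic a
  | compl {a b a' : M} : RightBasic a → RightBasic b →
      IsRightLcm a b (b * a') → RightBasic a'

/-- Minimal number of atoms needed to express `a`. -/
noncomputable def atomLen (a : M) : ℕ :=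
  sInf {n | ∃ l : List M, (∀ x ∈ l, Atomic x) ∧ l.length = n ∧ l.prod = a}


section Aux

variable {M : Type*} [Monoid M]

lemma aux_inv_comm (h : IsGcdMon M) {s t : M} (hst : s * t = 1) : t * s = 1 :=
  h.mul_left_cancel s (t * s) 1 (by rw [← mul_assoc, hst, one_mul, mul_one])

lemma aux_eq_one_of_mul_eq_one (h : IsGcdMon M) {s t : M} (hst : s * t = 1) :
    s = 1 ∧ t = 1 := by
  have hts := aux_inv_comm h hst
  have hs : s = 1 := h.unit_eq_one s ⟨⟨s, t, hst, hts⟩, rfl⟩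
  refine ⟨hs, ?_⟩
  rw [hs, one_mul] at hst
  exact hst

lemma aux_rightLcm_unique (h : IsGcdMon M) {a b m m' : M}
    (h1 : IsRightLcm a b m) (h2 : IsRightLcm a b m') : m = m' := by
  obtain ⟨s, hs⟩ := h1.2.2 m' h2.1 h2.2.1
  obtain ⟨t, ht⟩ := h2.2.2 m h1.1 h1.2.1
  have hmul : m * (s * t) = m * 1 := by rw [← mul_assoc, hs, ht, mul_one]
  have hst := h.mul_left_cancel _ _ _ hmul
  obtain ⟨hs1, _⟩ := aux_eq_one_of_mul_eq_one h hst
  rw [← hs, hs1, mul_one]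

lemma aux_exists_rightLcm (h : IsGcdMon M) {a b : M} (hm : CommonRightMul a b) :
    ∃ l, IsRightLcm a b l := by
  obtain ⟨m, ⟨a', ha⟩, ⟨b', hb⟩⟩ := hm
  obtain ⟨d, ⟨u, hu⟩, ⟨v, hv⟩, hd⟩ := h.exists_rightGcd a' b'
  have hbv : b * v = a * u := by
    apply h.mul_right_cancel d
    rw [mul_assoc, mul_assoc, hu, hv, ha, hb]
  refine ⟨a * u, ⟨u, rfl⟩, ⟨v, hbv⟩, ?_⟩
  rintro n ⟨na, hna⟩ ⟨nb, hnb⟩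
  obtain ⟨g, ⟨t, hgl⟩, hgn, hg⟩ := h.exists_leftGcd (a * u) n
  obtain ⟨ga, hga⟩ := hg a ⟨u, rfl⟩ ⟨na, hna⟩
  obtain ⟨gb, hgb⟩ := hg b ⟨v, hbv⟩ ⟨nb, hnb⟩
  have hgat : ga * t = u := by
    apply h.mul_left_cancel a
    rw [← mul_assoc, hga, hgl]
  have hgbt : gb * t = v := by
    apply h.mul_left_cancel b
    rw [← mul_assoc, hgb, hgl, ← hbv]
  have hda : ga * (t * d) = a' := by rw [← mul_assoc, hgat, hu]
  have hdb : gb * (t * d) = b' := by rw [← mul_assoc, hgbt, hv]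
  obtain ⟨k, hk⟩ := hd (t * d) ⟨ga, hda⟩ ⟨gb, hdb⟩
  have hkt : k * t = 1 := by
    apply h.mul_right_cancel d
    rw [one_mul, mul_assoc, hk]
  obtain ⟨_, ht1⟩ := aux_eq_one_of_mul_eq_one h hkt
  rw [ht1, mul_one] at hgl
  rw [← hgl]
  exact hgn

end Aux

/-- same-level confluence when `a_i`, `x`, `y` have a common
right multiple. -/
theorem stmt_14 {M : Type*} [Monoid M] (h : IsGcdMon M) {i : ℕ}
    (hi : i % 2 = 0) {x y v w : M} {a b c : List M}
    (h1 : Reduce i x a b) (h2 : Reduce i y a c)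
    (hm : ∃ m, LeftDvd x m ∧ LeftDvd y m ∧ LeftDvd (a.getD (i - 1) 1) m)
    (hv : IsRightLcm x y (x * v)) (hw : x * v = y * w) :
    ∃ d, Reduce i v b d ∧ Reduce i w c d := by
  rcases h1 with ⟨hi1, -⟩ |
    ⟨hi2, -, p, s, am, ai, ap, bi, bp, x', hp, ha, hb, hL1, hE1, hP1⟩ | ⟨-, hodd, -⟩
  · omega
  swap
  · omega
  rcases h2 with ⟨hi1, -⟩ |
    ⟨-, -, q, s2, am2, ai2, ap2, ci, cp, y', hq, ha2, hc, hL2, hE2, hP2⟩ | ⟨-, hodd, -⟩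
  · omega
  swap
  · omega
  -- identify the two decompositions of `a`
  rw [ha] at ha2
  obtain ⟨rfl, htail⟩ := List.append_inj ha2 (by rw [hp, hq])
  simp only [List.cons.injEq] at htail
  obtain ⟨rfl, rfl, rfl, rfl⟩ := htail
  -- the common multiple
  obtain ⟨m, hxm, hym, haim⟩ := hm
  have hgetD : a.getD (i - 1) 1 = ai := by
    rw [ha, List.getD_append_right _ _ _ _ (by omega : p.length ≤ i - 1)]
    have hidx : i - 1 - p.length = 1 := by omega
    rw [hidx]; rfl
  rw [hgetD] at haim
  have hxvm : LeftDvd (x * v) m := hv.2.2 m hxm hym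
  -- the lcm of x*v and ai
  obtain ⟨z, hzx, hzai, hzmin⟩ := aux_exists_rightLcm h ⟨m, hxvm, haim⟩
  obtain ⟨t1, ht1⟩ := hzx
  obtain ⟨t2, ht2⟩ := hzai
  -- x ∨ ai divides z
  obtain ⟨t3, ht3⟩ := hL1.2.2 z ⟨v * t1, by rw [← mul_assoc]; exact ht1⟩ ⟨t2, ht2⟩
  have hbt3 : bi * t3 = v * t1 := by
    apply h.mul_left_cancel x
    rw [← mul_assoc, ht3, ← mul_assoc, ht1]
  -- the lcm of v and bi
  obtain ⟨l, hlv, hlbi, hlmin⟩ :=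
    aux_exists_rightLcm h (⟨v * t1, ⟨t1, rfl⟩, ⟨t3, hbt3⟩⟩ : CommonRightMul v bi)
  obtain ⟨di, hdi⟩ := hlv
  obtain ⟨v', hv'⟩ := hlbi
  have hLv : IsRightLcm v bi (v * di) := by
    rw [hdi]; exact ⟨⟨di, hdi⟩, ⟨v', hv'⟩, hlmin⟩
  have hEv : v * di = bi * v' := by rw [hdi, hv']
  have hZ1ai : ai * (x' * v') = x * v * di := by
    rw [← mul_assoc, ← hE1, mul_assoc, ← hEv, ← mul_assoc]
  have hZ1 : IsRightLcm (x * v) ai (x * v * di) := by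
    refine ⟨⟨di, rfl⟩, ⟨x' * v', hZ1ai.symm ▸ rfl⟩, ?_⟩
    rintro n ⟨n1, hn1⟩ ⟨n2, hn2⟩
    obtain ⟨n3, hn3⟩ := hL1.2.2 n ⟨v * n1, by rw [← mul_assoc]; exact hn1⟩ ⟨n2, hn2⟩
    have hbn3 : bi * n3 = v * n1 := by
      apply h.mul_left_cancel x
      rw [← mul_assoc, hn3, ← mul_assoc, hn1]
    obtain ⟨n4, hn4⟩ := hlmin (bi * n3) ⟨n1, hbn3.symm⟩ ⟨n3, rfl⟩
    refine ⟨n4, ?_⟩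
    have hln4 : v * di * n4 = bi * n3 := by rw [hdi]; exact hn4
    calc x * v * di * n4 = x * (v * di * n4) := by simp only [mul_assoc]
      _ = x * (bi * n3) := by rw [hln4]
      _ = n := by rw [← mul_assoc, hn3]
  -- symmetric side for w and ci
  have hywz : LeftDvd (y * w) z := by rw [← hw]; exact ⟨t1, ht1⟩
  obtain ⟨u1, hu1⟩ := hywz
  obtain ⟨u3, hu3⟩ := hL2.2.2 z ⟨w * u1, by rw [← mul_assoc]; exact hu1⟩ ⟨t2, ht2⟩
  have hcu3 : ci * u3 = w * u1 := by
    apply h.mul_left_cancel y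
    rw [← mul_assoc, hu3, ← mul_assoc, hu1]
  obtain ⟨l2, hl2w, hl2ci, hl2min⟩ :=
    aux_exists_rightLcm h (⟨w * u1, ⟨u1, rfl⟩, ⟨u3, hcu3⟩⟩ : CommonRightMul w ci)
  obtain ⟨ei, hei⟩ := hl2w
  obtain ⟨w', hw'⟩ := hl2ci
  have hLw : IsRightLcm w ci (w * ei) := by
    rw [hei]; exact ⟨⟨ei, hei⟩, ⟨w', hw'⟩, hl2min⟩
  have hEw : w * ei = ci * w' := by rw [hei, hw']
  have hZ2ai : ai * (y' * w') = y * w * ei := by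
    rw [← mul_assoc, ← hE2, mul_assoc, ← hEw, ← mul_assoc]
  have hZ2 : IsRightLcm (y * w) ai (y * w * ei) := by
    refine ⟨⟨ei, rfl⟩, ⟨y' * w', hZ2ai.symm ▸ rfl⟩, ?_⟩
    rintro n ⟨n1, hn1⟩ ⟨n2, hn2⟩
    obtain ⟨n3, hn3⟩ := hL2.2.2 n ⟨w * n1, by rw [← mul_assoc]; exact hn1⟩ ⟨n2, hn2⟩
    have hcn3 : ci * n3 = w * n1 := by
      apply h.mul_left_cancel y
      rw [← mul_assoc, hn3, ← mul_assoc, hn1]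
    obtain ⟨n4, hn4⟩ := hl2min (ci * n3) ⟨n1, hcn3.symm⟩ ⟨n3, rfl⟩
    refine ⟨n4, ?_⟩
    have hln4 : w * ei * n4 = ci * n3 := by rw [hei]; exact hn4
    calc y * w * ei * n4 = y * (w * ei * n4) := by simp only [mul_assoc]
      _ = y * (ci * n3) := by rw [hln4]
      _ = n := by rw [← mul_assoc, hn3]
  -- the two lcms coincide
  rw [← hw] at hZ2
  have hdiei : di = ei := by
    apply h.mul_left_cancel (x * v)
    exact aux_rightLcm_unique h hZ1 hZ2
  subst hdiei
  have hx'v' : x' * v' = y' * w' := by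
    apply h.mul_left_cancel ai
    rw [hZ1ai, hZ2ai, hw]
  -- the common last entry
  obtain ⟨dp, hdp⟩ := hv.2.2 ap ⟨bp, hP1⟩ ⟨cp, hP2⟩
  have hbp : v * dp = bp := by
    apply h.mul_left_cancel x
    rw [← mul_assoc, hdp, hP1]
  have hcp : w * dp = cp := by
    apply h.mul_left_cancel y
    rw [← mul_assoc, ← hw, hdp, hP2]
  refine ⟨p ++ (am * x' * v') :: di :: dp :: s, ?_, ?_⟩
  · exact Or.inr (Or.inl ⟨hi2, hi, p, s, am * x', bi, bp, di, dp, v',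
      hp, hb, rfl, hLv, hEv, hbp⟩)
  · refine Or.inr (Or.inl ⟨hi2, hi, p, s, am * y', ci, cp, di, dp, w',
      hp, hc, ?_, hLw, hEw, hcp⟩)
    rw [show am * y' * w' = am * x' * v' by rw [mul_assoc, mul_assoc, hx'v']]

end MFR
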